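/- Let G be a group and X ⊆ G a piecewise syndetic subset of G. Then X is a J-set of G. -/
import Mathlib


/-- `X ⊆ G` is a J-set of the group `G`: for every finite set `F` of sequences
`ℕ → G`, there are `m ≥ 1`, `t(1) < … < t(m)` in `ℕ` and `a(1), …, a(m+1) ∈ G`
such that `a(1)·f(t(1))·a(2)·f(t(2))·⋯·a(m)·f(t(m))·a(m+1) ∈ X` for every `f ∈ F`. -/
def JSet {G : Type*} [Group G] (X : Set G) : Prop :=
  ∀ F : Finset (ℕ → G), ∃ m : ℕ, 1 ≤ m ∧ ∃ t : Fin m → ℕ, StrictMono t ∧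
    ∃ a : Fin (m + 1) → G, ∀ f ∈ F,
      (List.ofFn fun j : Fin m => a j.castSucc * f (t j)).prod * a (Fin.last m) ∈ X

/-- A subset `Y` of a group is thick if every finite set can be (right-)translated
into `Y`. -/
def Thick {G : Type*} [Group G] (Y : Set G) : Prop :=
  ∀ H : Finset G, ∃ s : G, ∀ h ∈ H, h * s ∈ Y

/-- A subset `X` of a group is piecewise syndetic if finitely many (left)
translates of `X` union to a thick set. -/
def PiecewiseSyndetic {G : Type*} [Group G] (X : Set G) : Prop :=
  ∃ H : Finset G, Thick (⋃ t ∈ H, {s : G | t * s ∈ X})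

/-- Grouping lemma: a product with fixed and variable slots can be rewritten
in the `a₁ x(t₁) a₂ ⋯ aₘ x(tₘ) aₘ₊₁` form, with `m ≥ 1` provided there is at
least one variable slot. -/
lemma grouping {G : Type*} [Group G] :
    ∀ (N : ℕ) (d : Fin N → Option G) (pre post : G),
    ∃ m : ℕ, ∃ t : Fin m → ℕ, StrictMono t ∧ ∃ a : Fin (m + 1) → G,
      (∀ x : ℕ → G,
        (List.ofFn fun i : Fin m => a i.castSucc * x (t i)).prod * a (Fin.last m)
          = pre * (List.ofFn fun j : Fin N => (d j).getD (x j)).prod * post) ∧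
      ((∃ j, d j = none) → 1 ≤ m) := by
  intro N
  induction N with
  | zero =>
    intro d pre post
    exact ⟨0, Fin.elim0, fun i => i.elim0, fun _ => pre * post,
      fun x => by simp, fun ⟨j, _⟩ => j.elim0⟩
  | succ N ih =>
    intro d pre post
    cases h0 : d 0 with
    | some g =>
      obtain ⟨m, t, hmono, a, heq, hm⟩ := ih (fun j => d j.succ) (pre * g) post
      refine ⟨m, fun i => t i + 1, fun i j hij => by simpa using hmono hij, a, ?_, ?_⟩
      · intro x
        have hh := heq (fun n => x (n + 1))
        simp only [List.ofFn_succ, List.prod_cons, h0, Option.getD_some, Fin.val_succ]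
        rw [hh]
        simp [mul_assoc]
      · rintro ⟨j, hj⟩
        refine hm ?_
        rcases Fin.eq_zero_or_eq_succ j with rfl | ⟨j', rfl⟩
        · rw [h0] at hj; exact absurd hj (by simp)
        · exact ⟨j', hj⟩
    | none =>
      obtain ⟨m, t, hmono, a, heq, -⟩ := ih (fun j => d j.succ) 1 post
      refine ⟨m + 1, Fin.cases 0 (fun i => t i + 1), ?_, Fin.cases pre a, ?_,
        fun _ => Nat.le_add_left 1 m⟩
      · intro i j hij
        induction i using Fin.cases with
        | zero =>
          induction j using Fin.cases with
          | zero => exact absurd hij (lt_irrefl _)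
          | succ j => simp
        | succ i =>
          induction j using Fin.cases with
          | zero => exact absurd hij (Fin.not_lt_zero _)
          | succ j =>
            simp only [Fin.cases_succ]
            exact Nat.succ_lt_succ (hmono (Fin.succ_lt_succ_iff.mp hij))
      · intro x
        have hh := heq (fun n => x (n + 1))
        simp only [List.ofFn_succ, List.prod_cons, h0, Option.getD_none, Fin.val_succ,
          Fin.castSucc_zero, Fin.cases_zero, Fin.cases_succ, ← Fin.succ_castSucc,
          ← Fin.succ_last, Fin.val_zero] at hh ⊢
        rw [mul_assoc (pre * x 0), hh]
        simp [mul_assoc]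

theorem stmt_9 {G : Type*} [Group G] (X : Set G) (hX : PiecewiseSyndetic X) :
    JSet X := by
  classical
  intro F
  rcases F.eq_empty_or_nonempty with rfl | hF
  · exact ⟨1, le_refl 1, fun _ => 0, Subsingleton.strictMono _, fun _ => 1,
      fun f hf => absurd hf (by simp)⟩
  obtain ⟨H, hH⟩ := hX
  obtain ⟨ι, _inst, hHJ⟩ :=
    Combinatorics.Line.exists_mono_in_high_dimension (↥F) (↥H)
  set N := Fintype.card ι with hN
  let e : ι ≃ Fin N := Fintype.equivFin ι
  -- the product associated to a word
  let P : (ι → ↥F) → G := fun w =>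
    (List.ofFn fun j : Fin N => (w (e.symm j) : ℕ → G) j).prod
  obtain ⟨s, hs⟩ := hH (Finset.image P Finset.univ)
  have key : ∀ w : ι → ↥F, ∃ t : ↥H, (t : G) * (P w * s) ∈ X := by
    intro w
    have h1 := hs (P w) (Finset.mem_image_of_mem P (Finset.mem_univ w))
    simp only [Set.mem_iUnion, Set.mem_setOf_eq] at h1
    obtain ⟨t, ht, h2⟩ := h1
    exact ⟨⟨t, ht⟩, h2⟩
  choose C hC using key
  obtain ⟨l, c, hc⟩ := hHJ C
  -- convert the line into slot data
  set d : Fin N → Option G :=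
    fun j => Option.map (fun g : ↥F => (g : ℕ → G) j) (l.idxFun (e.symm j)) with hd
  obtain ⟨m, t, hmono, a, heq, hm⟩ := grouping N d (c : G) s
  have hnone : ∃ j, d j = none := by
    obtain ⟨i, hi⟩ := l.proper
    exact ⟨e i, by simp [hd, hi]⟩
  refine ⟨m, hm hnone, t, hmono, a, ?_⟩
  intro f hf
  set x : ↥F := ⟨f, hf⟩ with hx
  have hP : (List.ofFn fun j : Fin N => (d j).getD (f j)).prod = P (l x) := by
    show _ = (List.ofFn fun j : Fin N => ((l.toFun x) (e.symm j) : ℕ → G) j).prod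
    apply congrArg
    apply congrArg
    funext j
    rw [Combinatorics.Line.toFun]
    cases hij : l.idxFun (e.symm j) with
    | none => simp [hd, hij, hx]
    | some g => simp [hd, hij]
  have := hC (l x)
  rw [hc x] at this
  have heqx := heq f
  rw [hP] at heqx
  rw [heqx]
  rw [mul_assoc]
  exact this
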